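/- Let f : ℝⁿ → ℝ be a convex function, x ∈ ℝⁿ and δ > 0. Then the set convexHull ℝ (⋃_{y ∈ closedBall(x, δ)} ∂f(y)) is convex and compact. (With δ = ρ/(2L), L a Lipschitz constant of f at x, this set is the normalized Goldstein ρ-subdifferential G_ρ f(x).) -/

import Mathlib

open scoped RealInnerProductSpace

/-- The ε-subdifferential of `g` at `x`. -/
def epsSubdiff {n : ℕ} (g : EuclideanSpace ℝ (Fin n) → ℝ) (ε : ℝ)
    (x : EuclideanSpace ℝ (Fin n)) : Set (EuclideanSpace ℝ (Fin n)) :=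
  {ξ | ∀ y, g y ≥ g x + ⟪ξ, y - x⟫ - ε}

/-- The subdifferential of `g` at `x`. -/
def subdiff {n : ℕ} (g : EuclideanSpace ℝ (Fin n) → ℝ)
    (x : EuclideanSpace ℝ (Fin n)) : Set (EuclideanSpace ℝ (Fin n)) :=
  {ξ | ∀ y, g y ≥ g x + ⟪ξ, y - x⟫}

/-- The t-spherical subdifferential of `g` at `x`. -/
def sphSubdiff {n : ℕ} (g : EuclideanSpace ℝ (Fin n) → ℝ) (t : ℝ)
    (x : EuclideanSpace ℝ (Fin n)) : Set (EuclideanSpace ℝ (Fin n)) :=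
  convexHull ℝ {ξ | ∃ d : EuclideanSpace ℝ (Fin n), ‖d‖ = 1 ∧ ξ ∈ subdiff g (x + t • d)}

/-- Convex hull of a compact subset of a finite-dimensional Euclidean space is compact. -/
lemma aux_isCompact_convexHull {n : ℕ} {s : Set (EuclideanSpace ℝ (Fin n))}
    (hs : IsCompact s) : IsCompact (convexHull ℝ s) := by
  classical
  rcases s.eq_empty_or_nonempty with rfl | ⟨s₀, hs₀⟩
  · simp only [convexHull_empty]; exact isCompact_empty
  · set φ : (Fin (n + 1) → ℝ) × (Fin (n + 1) → EuclideanSpace ℝ (Fin n)) → EuclideanSpace ℝ (Fin n) :=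
      fun p => ∑ i, p.1 i • p.2 i with hφdef
    have hT : IsCompact ((stdSimplex ℝ (Fin (n + 1))) ×ˢ
        (Set.pi Set.univ fun _ : Fin (n + 1) => s)) :=
      (isCompact_stdSimplex ℝ _).prod (isCompact_univ_pi fun _ => hs)
    have hφ : Continuous φ := by
      apply continuous_finset_sum
      intro i _
      exact ((continuous_apply i).comp continuous_fst).smul
        ((continuous_apply i).comp continuous_snd)
    have himg : convexHull ℝ s =
        φ '' ((stdSimplex ℝ (Fin (n + 1))) ×ˢ (Set.pi Set.univ fun _ : Fin (n + 1) => s)) := by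
      apply Set.Subset.antisymm
      · intro x hx
        obtain ⟨ι, hι, z, w, hzs, hind, hpos, hsum, hx⟩ :=
          eq_pos_convex_span_of_mem_convexHull hx
        letI := hι
        have hcard : Fintype.card ι ≤ n + 1 := by
          have h1 := hind.card_le_finrank_succ
          have h2 : Module.finrank ℝ (vectorSpan ℝ (Set.range z)) ≤
              Module.finrank ℝ (EuclideanSpace ℝ (Fin n)) :=
            Submodule.finrank_le _
          have h3 : Module.finrank ℝ (EuclideanSpace ℝ (Fin n)) = n := finrank_euclideanSpace_fin
          omega
        obtain ⟨e⟩ : Nonempty (ι ↪ Fin (n + 1)) :=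
          Function.Embedding.nonempty_of_card_le (by simpa using hcard)
        set z' : Fin (n + 1) → EuclideanSpace ℝ (Fin n) :=
          fun j => if h : ∃ i, e i = j then z h.choose else s₀ with hz'def
        set w' : Fin (n + 1) → ℝ :=
          fun j => ∑ i ∈ Finset.univ.filter (fun i => e i = j), w i with hw'def
        refine ⟨(w', z'), ⟨⟨fun j => ?_, ?_⟩, fun j _ => ?_⟩, ?_⟩
        · exact Finset.sum_nonneg fun i _ => (hpos i).le
        · show ∑ j, w' j = 1
          rw [← hsum]
          simp only [hw'def]
          exact Finset.sum_fiberwise _ _ _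
        · by_cases h : ∃ i, e i = j
          · simp only [hz'def, dif_pos h]
            exact hzs ⟨h.choose, rfl⟩
          · simp only [hz'def, dif_neg h]
            exact hs₀
        · show ∑ j, w' j • z' j = x
          calc ∑ j, w' j • z' j
              = ∑ j, ∑ i ∈ Finset.univ.filter (fun i => e i = j), w i • z' j := by
                simp [hw'def, Finset.sum_smul]
            _ = ∑ j, ∑ i ∈ Finset.univ.filter (fun i => e i = j), w i • z i := by
                refine Finset.sum_congr rfl fun j _ => Finset.sum_congr rfl fun i hi => ?_
                have hij : e i = j := (Finset.mem_filter.mp hi).2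
                subst hij
                have hex : ∃ i', e i' = e i := ⟨i, rfl⟩
                have : z' (e i) = z hex.choose := by simp only [hz'def, dif_pos hex]
                rw [this, e.injective hex.choose_spec]
            _ = ∑ i, w i • z i := Finset.sum_fiberwise _ _ _
            _ = x := hx
      · rintro _ ⟨⟨w, z⟩, ⟨⟨hw0, hw1⟩, hz⟩, rfl⟩
        exact (convex_convexHull ℝ s).sum_mem (fun i _ => hw0 i) hw1
          (fun i _ => subset_convexHull ℝ s (hz i (Set.mem_univ i)))
    rw [himg]
    exact hT.image hφ

theorem goldstein_convex_compact {n : ℕ}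
    (f : EuclideanSpace ℝ (Fin n) → ℝ) (hf : ConvexOn ℝ Set.univ f)
    (x : EuclideanSpace ℝ (Fin n)) (δ : ℝ) (hδ : 0 < δ) :
    Convex ℝ (convexHull ℝ (⋃ y ∈ Metric.closedBall x δ, subdiff f y)) ∧
    IsCompact (convexHull ℝ (⋃ y ∈ Metric.closedBall x δ, subdiff f y)) := by
  set S : Set (EuclideanSpace ℝ (Fin n)) := ⋃ y ∈ Metric.closedBall x δ, subdiff f y with hSdef
  have hcont : Continuous f := by
    rw [← continuousOn_univ]
    exact hf.continuousOn isOpen_univ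
  -- extrema of f on the bigger ball
  have hK : IsCompact (Metric.closedBall x (δ + 1)) := isCompact_closedBall x (δ + 1)
  have hxK : x ∈ Metric.closedBall x (δ + 1) := Metric.mem_closedBall_self (by linarith)
  obtain ⟨a, haK, ha⟩ := hK.exists_isMaxOn ⟨x, hxK⟩ hcont.continuousOn
  obtain ⟨b, hbK, hb⟩ := hK.exists_isMinOn ⟨x, hxK⟩ hcont.continuousOn
  set R : ℝ := f a - f b with hRdef
  -- every subgradient over the ball is bounded in norm by R
  have hbound : ∀ y ∈ Metric.closedBall x δ, ∀ ξ ∈ subdiff f y, ‖ξ‖ ≤ R := by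
    intro y hy ξ hξ
    rcases eq_or_ne ξ 0 with rfl | hne
    · have : f b ≤ f a := hb hxK |>.trans (ha hxK)
      simpa [hRdef] using this
    · set u : EuclideanSpace ℝ (Fin n) := ‖ξ‖⁻¹ • ξ with hudef
      have hnu : ‖u‖ = 1 := by
        rw [hudef, norm_smul, norm_inv, norm_norm, inv_mul_cancel₀ (norm_ne_zero_iff.mpr hne)]
      set z : EuclideanSpace ℝ (Fin n) := y + u with hzdef
      have hzK : z ∈ Metric.closedBall x (δ + 1) := by
        rw [Metric.mem_closedBall]
        calc dist z x ≤ dist z y + dist y x := dist_triangle z y x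
          _ ≤ 1 + δ := by
              have h1 : dist z y = ‖u‖ := by simp [hzdef, dist_eq_norm]
              have h2 : dist y x ≤ δ := Metric.mem_closedBall.mp hy
              rw [h1, hnu]; linarith
          _ = δ + 1 := by ring
      have hinner : ⟪ξ, z - y⟫ = ‖ξ‖ := by
        have : z - y = u := by simp [hzdef]
        rw [this, hudef, real_inner_smul_right, real_inner_self_eq_norm_sq, pow_two,
          ← mul_assoc, inv_mul_cancel₀ (norm_ne_zero_iff.mpr hne), one_mul]
      have hsub := hξ z
      rw [hinner] at hsub
      have h1 : f z ≤ f a := ha hzK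
      have h2 : f b ≤ f y := hb (Metric.closedBall_subset_closedBall (by linarith) hy)
      simp only [ge_iff_le] at hsub
      rw [hRdef]
      linarith
  -- the set C of pairs (y, ξ) with ξ a subgradient at y
  set C : Set (EuclideanSpace ℝ (Fin n) × EuclideanSpace ℝ (Fin n)) := (Metric.closedBall x δ ×ˢ Metric.closedBall (0 : EuclideanSpace ℝ (Fin n)) R) ∩
      ⋂ z, {p : EuclideanSpace ℝ (Fin n) × EuclideanSpace ℝ (Fin n) | f p.1 + ⟪p.2, z - p.1⟫ ≤ f z} with hCdef
  have hCclosed : IsClosed C := by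
    apply IsClosed.inter (Metric.isClosed_closedBall.prod Metric.isClosed_closedBall)
    apply isClosed_iInter
    intro z
    apply isClosed_le
    · exact (hcont.comp continuous_fst).add
        (continuous_snd.inner (continuous_const.sub continuous_fst))
    · exact continuous_const
  have hCcompact : IsCompact C :=
    ((isCompact_closedBall x δ).prod (isCompact_closedBall 0 R)).of_isClosed_subset
      hCclosed Set.inter_subset_left
  have hSeq : S = Prod.snd '' C := by
    apply Set.Subset.antisymm
    · intro ξ hξ
      rw [hSdef, Set.mem_iUnion₂] at hξ
      obtain ⟨y, hy, hyξ⟩ := hξ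
      refine ⟨(y, ξ), ⟨⟨hy, ?_⟩, ?_⟩, rfl⟩
      · rw [Metric.mem_closedBall, dist_zero_right]
        exact hbound y hy ξ hyξ
      · rw [Set.mem_iInter]
        intro z
        exact hyξ z
    · rintro _ ⟨⟨y, ξ⟩, ⟨⟨hy, _⟩, hmem⟩, rfl⟩
      rw [Set.mem_iInter] at hmem
      rw [hSdef, Set.mem_iUnion₂]
      exact ⟨y, hy, fun z => hmem z⟩
  have hScompact : IsCompact S := by
    rw [hSeq]
    exact hCcompact.image continuous_snd
  exact ⟨convex_convexHull ℝ S, aux_isCompact_convexHull hScompact⟩
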